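/- arXiv:1905.03657 — 2 statements merged into one kernel-verified Lean document; each statement's English description precedes it below -/
import Mathlib

section
/- Let Y_1, ..., Y_{n+1} be exchangeable real-valued random variables with continuous joint distribution (so ties have probability zero). Define the rank statistic π = (n+1)^{-1} Σ_{j=1}^{n+1} 1{Y_j ≤ Y_{n+1}}. Then for any α ∈ (0,1), P(π ≥ ⌊(n+1)α⌋/(n+1)) ≥ 1 - α. -/
open MeasureTheory Finset


noncomputable def rnk {N : ℕ} (v : Fin N → ℝ) (i : Fin N) : ℕ :=
  (Finset.univ.filter fun j => v j ≤ v i).card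

lemma rnk_eq_sum {N : ℕ} (v : Fin N → ℝ) (i : Fin N) :
    rnk v i = ∑ j : Fin N, if v j ≤ v i then 1 else 0 := by
  simp [rnk, Finset.sum_boole]

lemma rnk_measurable {N : ℕ} (i : Fin N) : Measurable fun v : Fin N → ℝ => rnk v i := by
  simp only [rnk_eq_sum]
  apply Finset.measurable_sum
  intro j _
  exact Measurable.ite (measurableSet_le (measurable_pi_apply j) (measurable_pi_apply i))
    measurable_const measurable_const

lemma rnk_lt {N : ℕ} {v : Fin N → ℝ} {i i' : Fin N} (h : v i < v i') : rnk v i < rnk v i' := by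
  apply Finset.card_lt_card
  rw [Finset.ssubset_def]
  constructor
  · intro j hj
    simp only [mem_filter] at *
    exact ⟨hj.1, hj.2.trans h.le⟩
  · intro hsub
    have := hsub (Finset.mem_filter.2 ⟨mem_univ i', le_refl _⟩)
    simp only [mem_filter] at this
    exact absurd this.2 (not_le.2 h)

lemma one_le_rnk {N : ℕ} (v : Fin N → ℝ) (i : Fin N) : 1 ≤ rnk v i :=
  Finset.card_pos.2 ⟨i, Finset.mem_filter.2 ⟨mem_univ i, le_refl _⟩⟩

lemma rnk_injective {N : ℕ} {v : Fin N → ℝ} (hv : Function.Injective v) :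
    Function.Injective (rnk v) := by
  intro i i' h
  by_contra hne
  have hvne : v i ≠ v i' := fun h' => hne (hv h')
  rcases lt_or_gt_of_ne hvne with hlt | hlt
  · exact absurd h (rnk_lt hlt).ne
  · exact absurd h.symm (rnk_lt hlt).ne

lemma count_rnk_le {N m : ℕ} {v : Fin N → ℝ} (hv : Function.Injective v) :
    (Finset.univ.filter fun i : Fin N => rnk v i ≤ m).card ≤ m := by
  classical
  have h : (Finset.univ.filter fun i : Fin N => rnk v i ≤ m).card ≤ (Finset.Icc 1 m).card := by
    apply Finset.card_le_card_of_injOn (fun i => rnk v i)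
    · intro i hi
      simp only [Finset.mem_coe, mem_filter] at hi
      exact Finset.mem_Icc.2 ⟨one_le_rnk v i, hi.2⟩
    · exact fun a _ b _ hab => rnk_injective hv hab
  simpa [Nat.card_Icc] using h

lemma rnk_comp {N : ℕ} (v : Fin N → ℝ) (e : Equiv.Perm (Fin N)) (i : Fin N) :
    rnk (fun j => v (e j)) i = rnk v (e i) := by
  unfold rnk
  apply Finset.card_bij (fun j _ => e j)
  · intro j hj
    simp only [mem_filter] at *
    exact ⟨mem_univ _, hj.2⟩
  · intro a _ b _ hab
    exact e.injective hab
  · intro b hb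
    refine ⟨e.symm b, ?_, by simp⟩
    simp only [mem_filter] at *
    simpa using hb.2

private lemma stmt0_easy {Ω : Type*} [MeasurableSpace Ω] (μ : Measure Ω) [IsProbabilityMeasure μ]
    (n : ℕ) (Y : Fin (n + 1) → Ω → ℝ)
    (α : ℝ) (hα : 0 < α) (hα1 : α < 1)
    (c : ℝ) (hc_def : c = (n : ℝ) + 1) (hc : 0 < c)
    (hk0 : ⌊c * α⌋ ≤ 0) :
    ENNReal.ofReal (1 - α) ≤
      μ {ω | (⌊((n : ℝ) + 1) * α⌋ : ℝ) / ((n : ℝ) + 1) ≤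
        (1 / ((n : ℝ) + 1)) *
          ∑ j : Fin (n + 1), if Y j ω ≤ Y (Fin.last n) ω then (1 : ℝ) else 0} := by
  have h1 : μ Set.univ ≤ μ {ω | (⌊((n : ℝ) + 1) * α⌋ : ℝ) / ((n : ℝ) + 1) ≤
        (1 / ((n : ℝ) + 1)) *
          ∑ j : Fin (n + 1), if Y j ω ≤ Y (Fin.last n) ω then (1 : ℝ) else 0} := by
    apply measure_mono
    intro ω _
    simp only [Set.mem_setOf_eq]
    have hL : (⌊((n : ℝ) + 1) * α⌋ : ℝ) / ((n : ℝ) + 1) ≤ 0 := by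
      apply div_nonpos_of_nonpos_of_nonneg
      · exact_mod_cast Int.cast_nonpos.2 (by rw [hc_def] at hk0; exact_mod_cast hk0)
      · linarith [hc, hc_def]
    have hR : 0 ≤ (1 / ((n : ℝ) + 1)) *
        ∑ j : Fin (n + 1), if Y j ω ≤ Y (Fin.last n) ω then (1 : ℝ) else 0 := by
      apply mul_nonneg
      · positivity
      · apply Finset.sum_nonneg
        intro j _
        split <;> norm_num
    linarith
  rw [measure_univ] at h1
  exact le_trans (ENNReal.ofReal_le_one.2 (by linarith)) h1

private lemma stmt0_hard {Ω : Type*} [MeasurableSpace Ω] (μ : Measure Ω) [IsProbabilityMeasure μ]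
    (n : ℕ) (Y : Fin (n + 1) → Ω → ℝ) (hmeas : ∀ i, Measurable (Y i))
    (hexch : ∀ e : Equiv.Perm (Fin (n + 1)),
      Measure.map (fun ω i => Y (e i) ω) μ = Measure.map (fun ω i => Y i ω) μ)
    (hties : ∀ i j, i ≠ j → μ {ω | Y i ω = Y j ω} = 0)
    (α : ℝ) (hα : 0 < α) (hα1 : α < 1)
    (c : ℝ) (hc_def : c = (n : ℝ) + 1) (hc : 0 < c)
    (hS : ∀ ω, (∑ j : Fin (n+1), if Y j ω ≤ Y (Fin.last n) ω then (1:ℝ) else 0)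
      = ((rnk (fun j => Y j ω) (Fin.last n) : ℕ) : ℝ))
    (hk0 : 0 < ⌊c * α⌋) :
    ENNReal.ofReal (1 - α) ≤
      μ {ω | (⌊((n : ℝ) + 1) * α⌋ : ℝ) / ((n : ℝ) + 1) ≤
        (1 / ((n : ℝ) + 1)) *
          ∑ j : Fin (n + 1), if Y j ω ≤ Y (Fin.last n) ω then (1 : ℝ) else 0} := by
  classical
  set k : ℕ := ⌊c * α⌋.toNat with hk_def
  have hk1 : 1 ≤ k := by
    rw [hk_def]
    omega
  set m : ℕ := k - 1 with hm_def
  have hkm : k = m + 1 := by omega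
  -- cast facts
  have hkR : (k : ℝ) = (⌊c * α⌋ : ℝ) := by
    rw [hk_def]
    exact_mod_cast congrArg (Int.cast : ℤ → ℝ) (Int.toNat_of_nonneg hk0.le)
  have hmR : (m : ℝ) ≤ c * α := by
    have h1 : (⌊c * α⌋ : ℝ) ≤ c * α := Int.floor_le _
    have h2 : (m : ℝ) = (k : ℝ) - 1 := by
      rw [hkm]; push_cast; ring
    linarith
  -- measurable vector map
  have hYvec : Measurable fun ω => fun i => Y i ω := measurable_pi_lambda _ hmeas
  -- the events A i
  set A : Fin (n+1) → Set Ω := fun i => {ω | rnk (fun j => Y j ω) i ≤ m} with hA_def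
  have hAmeas : ∀ i, MeasurableSet (A i) := by
    intro i
    exact ((rnk_measurable i).comp hYvec) (show MeasurableSet (Set.Iic m) from trivial)
  -- no ties event
  set U : Set Ω := ⋃ i, ⋃ j, {ω | i ≠ j ∧ Y i ω = Y j ω} with hU_def
  have hU0 : μ U = 0 := by
    apply measure_iUnion_null
    intro i
    apply measure_iUnion_null
    intro j
    by_cases h : i = j
    · subst h
      simp
    · exact measure_mono_null (fun ω hω => hω.2) (hties i j h)
  have hUmeas : MeasurableSet U := by
    apply MeasurableSet.iUnion
    intro i
    apply MeasurableSet.iUnion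
    intro j
    by_cases h : i = j
    · subst h
      simp
    · have : {ω | i ≠ j ∧ Y i ω = Y j ω} = {ω | Y i ω = Y j ω} := by
        ext ω; simp [h]
      rw [this]
      exact measurableSet_eq_fun (hmeas i) (hmeas j)
  set T : Set Ω := Uᶜ with hT_def
  have hTmeas : MeasurableSet T := hUmeas.compl
  have hTinj : ∀ ω ∈ T, Function.Injective (fun i => Y i ω) := by
    intro ω hω i j hij
    by_contra hne
    exact hω (Set.mem_iUnion.2 ⟨i, Set.mem_iUnion.2 ⟨j, ⟨hne, hij⟩⟩⟩)
  -- exchangeability: all A i have equal measure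
  have hA_eq : ∀ i, μ (A i) = μ (A (Fin.last n)) := by
    intro i
    set e : Equiv.Perm (Fin (n+1)) := Equiv.swap i (Fin.last n) with he_def
    have hY'vec : Measurable fun ω => fun j => Y (e j) ω :=
      measurable_pi_lambda _ (fun j => hmeas _)
    have hB : MeasurableSet {v : Fin (n+1) → ℝ | rnk v (Fin.last n) ≤ m} :=
      (rnk_measurable (Fin.last n)) (show MeasurableSet (Set.Iic m) from trivial)
    have key : ∀ ω, rnk (fun j => Y (e j) ω) (Fin.last n) = rnk (fun j => Y j ω) i := by
      intro ω
      have := rnk_comp (fun j => Y j ω) e (Fin.last n)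
      simpa [he_def, Equiv.swap_apply_right] using this
    have h1 : A (Fin.last n) = (fun ω => fun j => Y j ω) ⁻¹' {v | rnk v (Fin.last n) ≤ m} := rfl
    have h2 : A i = (fun ω => fun j => Y (e j) ω) ⁻¹' {v | rnk v (Fin.last n) ≤ m} := by
      ext ω
      simp only [hA_def, Set.mem_preimage, Set.mem_setOf_eq, key ω]
    rw [h1, h2, ← Measure.map_apply hY'vec hB, ← Measure.map_apply hYvec hB, hexch e]
  -- pointwise count bound
  have hcount : ∀ ω, (∑ i : Fin (n+1), (A i ∩ T).indicator (fun _ => (1:ENNReal)) ω)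
      ≤ (m : ENNReal) := by
    intro ω
    by_cases hω : ω ∈ T
    · have heq : ∑ i : Fin (n+1), (A i ∩ T).indicator (fun _ => (1:ENNReal)) ω
          = ((Finset.univ.filter fun i : Fin (n+1) =>
              rnk (fun j => Y j ω) i ≤ m).card : ENNReal) := by
        rw [← Finset.sum_boole]
        refine Finset.sum_congr rfl fun i _ => ?_
        simp [Set.indicator_apply, Set.mem_inter_iff, hω, hA_def, Set.mem_setOf_eq]
      rw [heq]
      exact_mod_cast Nat.cast_le.2 (count_rnk_le (hTinj ω hω))
    · simp [Set.indicator_apply, hω]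
  -- sum of measures bound
  have hsum : ∑ i : Fin (n+1), μ (A i ∩ T) ≤ (m : ENNReal) := by
    have heq : ∑ i : Fin (n+1), μ (A i ∩ T)
        = ∫⁻ ω, ∑ i : Fin (n+1), (A i ∩ T).indicator (fun _ => (1:ENNReal)) ω ∂μ := by
      rw [lintegral_finset_sum]
      · refine Finset.sum_congr rfl fun i _ => ?_
        rw [lintegral_indicator_const ((hAmeas i).inter hTmeas), one_mul]
      · exact fun i _ => measurable_const.indicator ((hAmeas i).inter hTmeas)
    rw [heq]
    calc ∫⁻ ω, ∑ i : Fin (n+1), (A i ∩ T).indicator (fun _ => (1:ENNReal)) ω ∂μ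
        ≤ ∫⁻ _, (m : ENNReal) ∂μ := lintegral_mono hcount
      _ = (m : ENNReal) := by simp
  have hAT : ∀ i, μ (A i) = μ (A i ∩ T) := by
    intro i
    refine le_antisymm ?_ (measure_mono Set.inter_subset_left)
    calc μ (A i) ≤ μ (A i ∩ T) + μ (A i \ T) := measure_le_inter_add_diff μ _ _
      _ ≤ μ (A i ∩ T) + 0 := by
          gcongr
          have hdiff : A i \ T ⊆ U := fun ω hω => Set.notMem_compl_iff.mp hω.2
          exact le_of_eq (measure_mono_null hdiff hU0)
      _ = μ (A i ∩ T) := add_zero _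
  have hNA : ((n+1 : ℕ) : ENNReal) * μ (A (Fin.last n)) ≤ (m : ENNReal) := by
    calc ((n+1 : ℕ) : ENNReal) * μ (A (Fin.last n))
        = ∑ _i : Fin (n+1), μ (A (Fin.last n)) := by
          simp [Finset.sum_const, mul_comm]
      _ = ∑ i : Fin (n+1), μ (A i) := (Finset.sum_congr rfl fun i _ => (hA_eq i).symm)
      _ = ∑ i : Fin (n+1), μ (A i ∩ T) := Finset.sum_congr rfl fun i _ => hAT i
      _ ≤ (m : ENNReal) := hsum
  have hmle : (m : ENNReal) ≤ ((n+1 : ℕ) : ENNReal) * ENNReal.ofReal α := by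
    calc (m : ENNReal) = ENNReal.ofReal (m : ℝ) := (ENNReal.ofReal_natCast m).symm
      _ ≤ ENNReal.ofReal (c * α) := ENNReal.ofReal_le_ofReal hmR
      _ = ENNReal.ofReal c * ENNReal.ofReal α := ENNReal.ofReal_mul hc.le
      _ = ((n+1 : ℕ) : ENNReal) * ENNReal.ofReal α := by
          congr 1
          rw [hc_def, show ((n : ℝ) + 1) = (((n+1 : ℕ) : ℕ) : ℝ) by push_cast; ring,
            ENNReal.ofReal_natCast]
  have hAle : μ (A (Fin.last n)) ≤ ENNReal.ofReal α := by
    have h := hNA.trans hmle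
    rwa [ENNReal.mul_le_mul_iff_right (by simp) (by simp)] at h
  -- identify the event
  have hset : {ω | (⌊((n : ℝ) + 1) * α⌋ : ℝ) / ((n : ℝ) + 1) ≤
        (1 / ((n : ℝ) + 1)) *
          ∑ j : Fin (n + 1), if Y j ω ≤ Y (Fin.last n) ω then (1 : ℝ) else 0}
      = (A (Fin.last n))ᶜ := by
    ext ω
    simp only [Set.mem_setOf_eq, Set.mem_compl_iff, hA_def, not_le]
    rw [hS ω]
    rw [← hc_def]
    set r : ℕ := rnk (fun j => Y j ω) (Fin.last n) with hr_def
    constructor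
    · intro h
      have h2 : (⌊c * α⌋ : ℝ) ≤ (r : ℝ) := by
        rw [div_le_iff₀ hc] at h
        calc (⌊c * α⌋ : ℝ) ≤ 1 / c * (r : ℝ) * c := h
          _ = (r : ℝ) := by field_simp
      rw [← hkR] at h2
      have h3 : k ≤ r := by exact_mod_cast h2
      omega
    · intro h
      have h2 : k ≤ r := by omega
      have h3 : (⌊c * α⌋ : ℝ) ≤ (r : ℝ) := by
        rw [← hkR]
        exact_mod_cast h2
      rw [div_le_iff₀ hc]
      calc (⌊c * α⌋ : ℝ) ≤ (r : ℝ) := h3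
        _ = 1 / c * (r : ℝ) * c := by field_simp
  rw [hset, prob_compl_eq_one_sub (hAmeas (Fin.last n))]
  calc ENNReal.ofReal (1 - α) = 1 - ENNReal.ofReal α := by
        rw [ENNReal.ofReal_sub 1 hα.le, ENNReal.ofReal_one]
    _ ≤ 1 - μ (A (Fin.last n)) := tsub_le_tsub_left hAle 1


/-- Finite-sample validity rank lemma for conformal prediction:
for exchangeable continuous random variables `Y 0, ..., Y n` (the last one
playing the role of `Y_{n+1}`), the conformity rank
`π = (n+1)⁻¹ Σ_j 1{Y j ≤ Y (last)}` satisfies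
`P(π ≥ ⌊(n+1)α⌋/(n+1)) ≥ 1 - α`. -/
theorem stmt0 {Ω : Type*} [MeasurableSpace Ω] (μ : Measure Ω) [IsProbabilityMeasure μ]
    (n : ℕ) (Y : Fin (n + 1) → Ω → ℝ) (hmeas : ∀ i, Measurable (Y i))
    (hexch : ∀ e : Equiv.Perm (Fin (n + 1)),
      Measure.map (fun ω i => Y (e i) ω) μ = Measure.map (fun ω i => Y i ω) μ)
    (hties : ∀ i j, i ≠ j → μ {ω | Y i ω = Y j ω} = 0)
    (α : ℝ) (hα : 0 < α) (hα1 : α < 1) :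
    ENNReal.ofReal (1 - α) ≤
      μ {ω | (⌊((n : ℝ) + 1) * α⌋ : ℝ) / ((n : ℝ) + 1) ≤
        (1 / ((n : ℝ) + 1)) *
          ∑ j : Fin (n + 1), if Y j ω ≤ Y (Fin.last n) ω then (1 : ℝ) else 0} := by
  have hc : (0:ℝ) < (n : ℝ) + 1 := by positivity
  have hS : ∀ ω, (∑ j : Fin (n+1), if Y j ω ≤ Y (Fin.last n) ω then (1:ℝ) else 0)
      = ((rnk (fun j => Y j ω) (Fin.last n) : ℕ) : ℝ) := by
    intro ω
    rw [show (rnk (fun j => Y j ω) (Fin.last n) : ℕ)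
        = ∑ j : Fin (n+1), if Y j ω ≤ Y (Fin.last n) ω then 1 else 0 from rnk_eq_sum _ _]
    push_cast
    rfl
  by_cases hk0 : ⌊((n : ℝ) + 1) * α⌋ ≤ 0
  · exact stmt0_easy μ n Y α hα hα1 _ rfl hc hk0
  · exact stmt0_hard μ n Y hmeas hexch hties α hα hα1 _ rfl hc hS (lt_of_not_ge hk0)
end

section
/- Let p : ℝ → [0, ∞) be a continuous, strictly unimodal probability density (strictly increasing to the left of its mode and strictly decreasing to the right), with mode m, and fix α ∈ (0,1). Then there exists a unique pair (a, b) with a < m < b minimizing b - a subject to ∫_a^b p(u) du = 1 - α, and this minimizer satisfies p(a) = p(b). -/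
open MeasureTheory intervalIntegral

/-- Auxiliary: a continuous, integrable function that is strictly increasing on `Iic m`
attains every value `t ∈ (0, p m)` at some point strictly below `m`. -/
lemma stmt14_aux_ex {p : ℝ → ℝ} {m t : ℝ} (hcont : Continuous p)
    (hmono : StrictMonoOn p (Set.Iic m)) (hint : MeasureTheory.Integrable p)
    (ht0 : 0 < t) (htm : t < p m) : ∃ x, x < m ∧ p x = t := by
  have h1 : ∃ x0, x0 ≤ m ∧ p x0 < t := by
    by_contra h
    push_neg at h
    have hc : MeasureTheory.Integrable (fun _ : ℝ => t)
        (MeasureTheory.volume.restrict (Set.Iic m)) := by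
      apply (hint.restrict (s := Set.Iic m)).mono' aestronglyMeasurable_const
      filter_upwards [MeasureTheory.ae_restrict_mem measurableSet_Iic] with x hx
      rw [Real.norm_eq_abs, abs_of_pos ht0]
      exact h x hx
    rw [MeasureTheory.integrable_const_iff] at hc
    rcases hc with h' | h'
    · exact absurd h' (ne_of_gt ht0)
    · replace h' := h'.measure_univ_lt_top
      rw [MeasureTheory.Measure.restrict_apply_univ, Real.volume_Iic] at h'
      exact absurd h' (lt_irrefl _)
  obtain ⟨x0, hx0m, hx0⟩ := h1
  have hx0m' : x0 < m := by
    rcases lt_or_eq_of_le hx0m with h | h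
    · exact h
    · rw [h] at hx0; linarith
  obtain ⟨x, hx, hpx⟩ := intermediate_value_Ioo hx0m'.le hcont.continuousOn ⟨hx0, htm⟩
  exact ⟨x, hx.2, hpx⟩

/-- Auxiliary: the (partial) inverse of a continuous function strictly increasing on `Iic m`
is continuous on `(0, p m)`. -/
lemma stmt14_aux_cont {p : ℝ → ℝ} {m : ℝ} (hmono : StrictMonoOn p (Set.Iic m))
    {a : ℝ → ℝ} (ha : ∀ t ∈ Set.Ioo 0 (p m), a t < m ∧ p (a t) = t) :
    ContinuousOn a (Set.Ioo 0 (p m)) := by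
  rw [Metric.continuousOn_iff]
  intro t0 ht0 ε hε
  obtain ⟨ham, hap⟩ := ha t0 ht0
  set x0 := a t0 with hx0def
  set ε' : ℝ := min (ε / 2) ((m - x0) / 2) with hε'def
  have hε'0 : 0 < ε' := lt_min (by linarith) (by linarith)
  have hε'le : ε' ≤ (m - x0) / 2 := min_le_right _ _
  have hε'le2 : ε' ≤ ε / 2 := min_le_left _ _
  have h1 : x0 - ε' ≤ m := by linarith
  have h2 : x0 + ε' ≤ m := by linarith
  have hl : p (x0 - ε') < t0 := by
    rw [← hap]; exact hmono h1 ham.le (by linarith)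
  have hr : t0 < p (x0 + ε') := by
    rw [← hap]; exact hmono ham.le h2 (by linarith)
  refine ⟨min (t0 - p (x0 - ε')) (p (x0 + ε') - t0),
    lt_min (by linarith) (by linarith), ?_⟩
  intro t ht hdist
  obtain ⟨ham', hap'⟩ := ha t ht
  rw [Real.dist_eq] at hdist ⊢
  have hd1 : |t - t0| < t0 - p (x0 - ε') := lt_of_lt_of_le hdist (min_le_left _ _)
  have hd2 : |t - t0| < p (x0 + ε') - t0 := lt_of_lt_of_le hdist (min_le_right _ _)
  rw [abs_lt] at hd1 hd2
  have hlt : p (x0 - ε') < p (a t) := by rw [hap']; linarith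
  have hgt : p (a t) < p (x0 + ε') := by rw [hap']; linarith
  have h3 : x0 - ε' < a t := (hmono.lt_iff_lt h1 ham'.le).mp hlt
  have h4 : a t < x0 + ε' := (hmono.lt_iff_lt ham'.le h2).mp hgt
  rw [abs_lt]
  constructor <;> linarith

/-- The highest-density interval of a continuous strictly unimodal density:
there is a unique pair `(a, b)` with `a < m < b`, probability mass `1 - α`,
of minimal length among all such intervals, and it has equal density at its
endpoints: `p(a) = p(b)`. -/
theorem stmt14 (p : ℝ → ℝ) (m : ℝ) (hcont : Continuous p) (hpos : ∀ y, 0 ≤ p y)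
    (hmono : StrictMonoOn p (Set.Iic m)) (hanti : StrictAntiOn p (Set.Ici m))
    (hint : ∫ y : ℝ, p y = 1) (α : ℝ) (hα : 0 < α) (hα1 : α < 1) :
    ∃! q : ℝ × ℝ, q.1 < m ∧ m < q.2 ∧ (∫ u in q.1..q.2, p u) = 1 - α ∧
      (∀ a b : ℝ, a < b → (∫ u in a..b, p u) = 1 - α → q.2 - q.1 ≤ b - a) ∧
      p q.1 = p q.2 := by
  -- basic facts
  have hIg : MeasureTheory.Integrable p := by
    by_contra h
    rw [MeasureTheory.integral_undef h] at hint
    norm_num at hint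
  have hppos : ∀ x, 0 < p x := by
    intro x
    rcases le_total x m with hx | hx
    · have := hmono (show x - 1 ∈ Set.Iic m by simp only [Set.mem_Iic]; linarith)
        (Set.mem_Iic.mpr hx) (by linarith)
      linarith [hpos (x - 1)]
    · have := hanti (Set.mem_Ici.mpr hx)
        (show x + 1 ∈ Set.Ici m by simp only [Set.mem_Ici]; linarith) (by linarith)
      linarith [hpos (x + 1)]
  have hpm : 0 < p m := hppos m
  have hple : ∀ u, p u ≤ p m := by
    intro u
    rcases lt_trichotomy u m with h | h | h
    · exact (hmono (Set.mem_Iic.mpr h.le) Set.self_mem_Iic h).le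
    · rw [h]
    · exact (hanti Set.self_mem_Ici (Set.mem_Ici.mpr h.le) h).le
  -- the reflected density
  set q : ℝ → ℝ := fun x => p (2 * m - x) with hqdef
  have hqcont : Continuous q := hcont.comp (by continuity)
  have hqmono : StrictMonoOn q (Set.Iic m) := by
    intro x hx y hy hxy
    simp only [Set.mem_Iic] at hx hy
    exact hanti (show 2 * m - y ∈ Set.Ici m by simp only [Set.mem_Ici]; linarith)
      (show 2 * m - x ∈ Set.Ici m by simp only [Set.mem_Ici]; linarith) (by linarith)
  have hqm : q m = p m := by
    simp only [hqdef]
    congr 1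
    ring
  have hqint : MeasureTheory.Integrable q := hIg.comp_sub_left (2 * m)
  -- left endpoint function
  have hA' : ∀ t : ℝ, ∃ x, t ∈ Set.Ioo 0 (p m) → (x < m ∧ p x = t) := by
    intro t
    by_cases h : t ∈ Set.Ioo 0 (p m)
    · obtain ⟨x, h1, h2⟩ := stmt14_aux_ex hcont hmono hIg h.1 h.2
      exact ⟨x, fun _ => ⟨h1, h2⟩⟩
    · exact ⟨0, fun h' => absurd h' h⟩
  choose a ha' using hA'
  have ha : ∀ t ∈ Set.Ioo 0 (p m), a t < m ∧ p (a t) = t := fun t ht => ha' t ht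
  -- right endpoint function via reflection
  have hB' : ∀ t : ℝ, ∃ x, t ∈ Set.Ioo 0 (p m) → (x < m ∧ q x = t) := by
    intro t
    by_cases h : t ∈ Set.Ioo 0 (p m)
    · obtain ⟨x, h1, h2⟩ := stmt14_aux_ex hqcont hqmono hqint h.1 (hqm ▸ h.2)
      exact ⟨x, fun _ => ⟨h1, h2⟩⟩
    · exact ⟨0, fun h' => absurd h' h⟩
  choose c hc' using hB'
  have hc : ∀ t ∈ Set.Ioo 0 (p m), c t < m ∧ q (c t) = t := fun t ht => hc' t ht
  set b : ℝ → ℝ := fun t => 2 * m - c t with hbdef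
  have hb : ∀ t ∈ Set.Ioo 0 (p m), m < b t ∧ p (b t) = t := by
    intro t ht
    obtain ⟨h1, h2⟩ := hc t ht
    constructor
    · simp only [hbdef]; linarith
    · simpa only [hqdef] using h2
  -- uniqueness of endpoints
  have huL : ∀ t ∈ Set.Ioo 0 (p m), ∀ x, x < m → p x = t → x = a t := by
    intro t ht x hx hpx
    obtain ⟨h1, h2⟩ := ha t ht
    exact hmono.injOn (Set.mem_Iic.mpr hx.le) (Set.mem_Iic.mpr h1.le) (by rw [hpx, h2])
  have huR : ∀ t ∈ Set.Ioo 0 (p m), ∀ x, m < x → p x = t → x = b t := by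
    intro t ht x hx hpx
    obtain ⟨h1, h2⟩ := hc t ht
    have hx' : 2 * m - x < m := by linarith
    have hqx : q (2 * m - x) = t := by
      simp only [hqdef]
      rw [show 2 * m - (2 * m - x) = x by ring, hpx]
    have := hqmono.injOn (Set.mem_Iic.mpr hx'.le) (Set.mem_Iic.mpr h1.le)
      (by rw [hqx, h2])
    simp only [hbdef]; linarith
  -- continuity of endpoint functions
  have hacont : ContinuousOn a (Set.Ioo 0 (p m)) := stmt14_aux_cont hmono ha
  have hccont : ContinuousOn c (Set.Ioo 0 (p m)) := by
    have := stmt14_aux_cont hqmono (by rw [hqm]; exact hc)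
    rwa [hqm] at this
  have hbcont : ContinuousOn b (Set.Ioo 0 (p m)) :=
    (continuousOn_const.sub hccont)
  -- the mass function F
  set F : ℝ → ℝ := fun t => ∫ u in a t..b t, p u with hFdef
  have hFcont : ContinuousOn F (Set.Ioo 0 (p m)) := by
    have hP : Continuous (fun x => ∫ u in (0:ℝ)..x, p u) :=
      intervalIntegral.continuous_primitive (fun x y => hcont.intervalIntegrable x y) 0
    have hFeq : ∀ t, F t = (∫ u in (0:ℝ)..(b t), p u) - ∫ u in (0:ℝ)..(a t), p u := by
      intro t
      rw [intervalIntegral.integral_interval_sub_left (hcont.intervalIntegrable 0 (b t))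
        (hcont.intervalIntegrable 0 (a t))]
    simp only [hFdef]
    have : ContinuousOn (fun t => (∫ u in (0:ℝ)..(b t), p u) -
        ∫ u in (0:ℝ)..(a t), p u) (Set.Ioo 0 (p m)) :=
      (hP.comp_continuousOn hbcont).sub (hP.comp_continuousOn hacont)
    exact this.congr fun t _ => hFeq t
  -- F is strictly decreasing
  have hFanti : ∀ s ∈ Set.Ioo 0 (p m), ∀ t ∈ Set.Ioo 0 (p m), s < t → F t < F s := by
    intro s hs t ht hst
    obtain ⟨has, hpas⟩ := ha s hs
    obtain ⟨hat, hpat⟩ := ha t ht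
    obtain ⟨hbs, hpbs⟩ := hb s hs
    obtain ⟨hbt, hpbt⟩ := hb t ht
    have h1 : a s < a t := by
      rw [← hmono.lt_iff_lt (Set.mem_Iic.mpr has.le) (Set.mem_Iic.mpr hat.le)]
      rw [hpas, hpat]; exact hst
    have h2 : b t < b s := by
      rw [← hanti.lt_iff_gt (Set.mem_Ici.mpr hbs.le) (Set.mem_Ici.mpr hbt.le)]
      rw [hpbs, hpbt]; exact hst
    have e1 : F s = (∫ u in a s..a t, p u) + ((∫ u in a t..b t, p u) +
        ∫ u in b t..b s, p u) := by
      rw [intervalIntegral.integral_add_adjacent_intervals (hcont.intervalIntegrable _ _)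
        (hcont.intervalIntegrable _ _),
        intervalIntegral.integral_add_adjacent_intervals (hcont.intervalIntegrable _ _)
        (hcont.intervalIntegrable _ _)]
    have hpos1 : 0 < ∫ u in a s..a t, p u :=
      intervalIntegral.intervalIntegral_pos_of_pos_on (hcont.intervalIntegrable _ _)
        (fun x _ => hppos x) h1
    have hpos2 : 0 < ∫ u in b t..b s, p u :=
      intervalIntegral.intervalIntegral_pos_of_pos_on (hcont.intervalIntegrable _ _)
        (fun x _ => hppos x) h2
    simp only [hFdef] at e1 ⊢
    linarith
  -- a small level t₂ where the mass is below 1 - α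
  have hstep1 : ∃ t2 ∈ Set.Ioo 0 (p m), F t2 < 1 - α := by
    set ε : ℝ := (1 - α) / (2 * p m + 1) with hεdef
    have hε0 : 0 < ε := div_pos (by linarith) (by linarith)
    set t2 : ℝ := max (p (m - ε)) (p (m + ε)) with ht2def
    have hl : p (m - ε) < p m := hmono (Set.mem_Iic.mpr (by linarith))
      Set.self_mem_Iic (by linarith)
    have hr : p (m + ε) < p m := hanti Set.self_mem_Ici
      (Set.mem_Ici.mpr (by linarith)) (by linarith)
    have ht2 : t2 ∈ Set.Ioo 0 (p m) :=
      ⟨lt_max_of_lt_left (hppos _), max_lt hl hr⟩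
    obtain ⟨hat2, hpat2⟩ := ha t2 ht2
    obtain ⟨hbt2, hpbt2⟩ := hb t2 ht2
    have h1 : m - ε ≤ a t2 := by
      rw [← hmono.le_iff_le (Set.mem_Iic.mpr (by linarith : m - ε ≤ m))
        (Set.mem_Iic.mpr hat2.le)]
      rw [hpat2]; exact le_max_left _ _
    have h2 : b t2 ≤ m + ε := by
      rw [← hanti.le_iff_ge (Set.mem_Ici.mpr (by linarith : m ≤ m + ε))
        (Set.mem_Ici.mpr hbt2.le)]
      rw [hpbt2]; exact le_max_right _ _
    have hbound : F t2 ≤ (b t2 - a t2) * p m := by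
      have := intervalIntegral.integral_mono_on
        (μ := MeasureTheory.volume) (f := p) (g := fun _ => p m)
        (le_trans hat2.le hbt2.le) (hcont.intervalIntegrable _ _)
        intervalIntegrable_const (fun x _ => hple x)
      simpa only [hFdef, intervalIntegral.integral_const, smul_eq_mul] using this
    refine ⟨t2, ht2, ?_⟩
    have hba : b t2 - a t2 ≤ 2 * ε := by linarith
    have : (b t2 - a t2) * p m ≤ 2 * ε * p m :=
      mul_le_mul_of_nonneg_right hba hpm.le
    have hkey : 2 * ε * p m < 1 - α := by
      have : ε * (2 * p m + 1) = 1 - α := by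
        rw [hεdef]; field_simp
      nlinarith
    linarith
  obtain ⟨t2, ht2, hFt2⟩ := hstep1
  -- a large-mass level t₁ < t₂ where the mass exceeds 1 - α
  have hstep2 : ∃ t1 ∈ Set.Ioo 0 (p m), t1 < t2 ∧ 1 - α < F t1 := by
    have hlim : Filter.Tendsto (fun n : ℕ => ∫ u in (m - n)..(m + n), p u)
        Filter.atTop (nhds 1) := by
      rw [← hint]
      exact MeasureTheory.intervalIntegral_tendsto_integral hIg
        (by
          have h1 : Filter.Tendsto (fun n : ℕ => -(n : ℝ)) Filter.atTop Filter.atBot :=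
            Filter.tendsto_neg_atBot_iff.mpr tendsto_natCast_atTop_atTop
          have := Filter.tendsto_atBot_add_const_left Filter.atTop m h1
          simpa [sub_eq_add_neg] using this)
        (Filter.tendsto_atTop_add_const_left Filter.atTop m tendsto_natCast_atTop_atTop)
    have hev : ∀ᶠ n : ℕ in Filter.atTop,
        1 - α < ∫ u in (m - n)..(m + n), p u :=
      hlim.eventually (eventually_gt_nhds (by linarith))
    obtain ⟨n, hn, hn1⟩ := (hev.and (Filter.eventually_ge_atTop 1)).exists
    have hn1' : (1 : ℝ) ≤ (n : ℝ) := by exact_mod_cast hn1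
    set R1 : ℝ := m - n with hR1def
    set R2 : ℝ := m + n with hR2def
    have hR1m : R1 < m := by simp only [hR1def]; linarith
    have hR2m : m < R2 := by simp only [hR2def]; linarith
    set t0 : ℝ := min (p R1) (p R2) with ht0def
    have ht00 : 0 < t0 := lt_min (hppos _) (hppos _)
    set t1 : ℝ := min (t0 / 2) (t2 / 2) with ht1def
    have ht10 : 0 < t1 := lt_min (by linarith) (by linarith [ht2.1])
    have ht1t2 : t1 < t2 := lt_of_le_of_lt (min_le_right _ _) (by linarith [ht2.1])
    have ht1t0 : t1 < t0 := lt_of_le_of_lt (min_le_left _ _) (by linarith)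
    have ht1mem : t1 ∈ Set.Ioo 0 (p m) := ⟨ht10, lt_trans ht1t2 ht2.2⟩
    obtain ⟨hat1, hpat1⟩ := ha t1 ht1mem
    obtain ⟨hbt1, hpbt1⟩ := hb t1 ht1mem
    have h1 : a t1 < R1 := by
      rw [← hmono.lt_iff_lt (Set.mem_Iic.mpr hat1.le) (Set.mem_Iic.mpr hR1m.le)]
      rw [hpat1]
      exact lt_of_lt_of_le ht1t0 (min_le_left _ _)
    have h2 : R2 < b t1 := by
      rw [← hanti.lt_iff_gt (Set.mem_Ici.mpr hbt1.le) (Set.mem_Ici.mpr hR2m.le)]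
      rw [hpbt1]
      exact lt_of_lt_of_le ht1t0 (min_le_right _ _)
    have e1 : F t1 = (∫ u in a t1..R1, p u) + ((∫ u in R1..R2, p u) +
        ∫ u in R2..b t1, p u) := by
      rw [intervalIntegral.integral_add_adjacent_intervals (hcont.intervalIntegrable _ _)
        (hcont.intervalIntegrable _ _),
        intervalIntegral.integral_add_adjacent_intervals (hcont.intervalIntegrable _ _)
        (hcont.intervalIntegrable _ _)]
    have hpos1 : 0 ≤ ∫ u in a t1..R1, p u :=
      intervalIntegral.integral_nonneg h1.le (fun u _ => hpos u)
    have hpos2 : 0 ≤ ∫ u in R2..b t1, p u :=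
      intervalIntegral.integral_nonneg h2.le (fun u _ => hpos u)
    refine ⟨t1, ht1mem, ht1t2, ?_⟩
    simp only [hFdef] at e1 ⊢
    linarith
  obtain ⟨t1, ht1, ht1t2, hFt1⟩ := hstep2
  -- intermediate value: the level t* with mass exactly 1 - α
  have hsub : Set.Icc t1 t2 ⊆ Set.Ioo 0 (p m) := fun x hx =>
    ⟨lt_of_lt_of_le ht1.1 hx.1, lt_of_le_of_lt hx.2 ht2.2⟩
  obtain ⟨ts, htsmem, hFts⟩ := intermediate_value_Icc' ht1t2.le (hFcont.mono hsub)
    (Set.mem_Icc.mpr ⟨hFt2.le, hFt1.le⟩)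
  have hts : ts ∈ Set.Ioo 0 (p m) := hsub htsmem
  obtain ⟨haA, hpA⟩ := ha ts hts
  obtain ⟨hbB, hpB⟩ := hb ts hts
  set A : ℝ := a ts
  set B : ℝ := b ts
  have hAB : A < B := lt_trans haA hbB
  -- key properties used in minimality
  have hinside : ∀ u ∈ Set.Icc A B, ts ≤ p u := by
    intro u hu
    rcases le_total u m with h | h
    · rw [← hpA]
      exact (hmono.le_iff_le (Set.mem_Iic.mpr haA.le) (Set.mem_Iic.mpr h)).mpr hu.1
    · rw [← hpB]
      exact (hanti.le_iff_ge (Set.mem_Ici.mpr hbB.le) (Set.mem_Ici.mpr h)).mpr hu.2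
  have houtside : ∀ u, u ∉ Set.Icc A B → p u ≤ ts := by
    intro u hu
    rw [Set.mem_Icc, not_and_or, not_le, not_le] at hu
    rcases hu with h | h
    · rw [← hpA]
      exact (hmono (Set.mem_Iic.mpr (by linarith)) (Set.mem_Iic.mpr haA.le) h).le
    · rw [← hpB]
      exact (hanti (Set.mem_Ici.mpr hbB.le) (Set.mem_Ici.mpr (by linarith)) h).le
  -- minimality
  have hmin : ∀ x y : ℝ, x < y → (∫ u in x..y, p u) = 1 - α → B - A ≤ y - x := by
    intro x y hxy hmass
    set g : ℝ → ℝ := fun u => p u - ts with hgdef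
    have hgc : Continuous g := hcont.sub continuous_const
    have key : (∫ u in x..y, g u) ≤ ∫ u in A..B, g u := by
      rw [intervalIntegral.integral_of_le hxy.le, intervalIntegral.integral_of_le hAB.le]
      have hmeas : MeasurableSet (Set.Icc A B) := measurableSet_Icc
      have hIoc : MeasureTheory.IntegrableOn g (Set.Ioc x y) := hgc.integrableOn_Ioc
      have hIcc : MeasureTheory.IntegrableOn g (Set.Icc A B) := hgc.integrableOn_Icc
      calc ∫ u in Set.Ioc x y, g u
          = (∫ u in Set.Ioc x y ∩ Set.Icc A B, g u) +
            ∫ u in Set.Ioc x y \ Set.Icc A B, g u :=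
            (MeasureTheory.integral_inter_add_diff hmeas hIoc).symm
        _ ≤ ∫ u in Set.Ioc x y ∩ Set.Icc A B, g u := by
            have hle : (∫ u in Set.Ioc x y \ Set.Icc A B, g u) ≤ 0 :=
              MeasureTheory.setIntegral_nonpos (measurableSet_Ioc.diff hmeas)
                (fun u hu => by
                  have := houtside u hu.2
                  simp only [hgdef]; linarith)
            linarith
        _ ≤ ∫ u in Set.Icc A B, g u := by
            apply MeasureTheory.setIntegral_mono_set hIcc
            · filter_upwards [MeasureTheory.ae_restrict_mem hmeas] with u hu
              have := hinside u hu
              simp only [hgdef, Pi.zero_apply]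
              linarith
            · exact Set.inter_subset_right.eventuallyLE
        _ = ∫ u in Set.Ioc A B, g u := MeasureTheory.integral_Icc_eq_integral_Ioc
    have e1 : (∫ u in x..y, g u) = (1 - α) - ts * (y - x) := by
      simp only [hgdef]
      rw [intervalIntegral.integral_sub (hcont.intervalIntegrable x y)
        intervalIntegrable_const, hmass, intervalIntegral.integral_const, smul_eq_mul]
      ring
    have hmassAB : (∫ u in A..B, p u) = 1 - α := hFts
    have e2 : (∫ u in A..B, g u) = (1 - α) - ts * (B - A) := by
      simp only [hgdef]
      rw [intervalIntegral.integral_sub (hcont.intervalIntegrable A B)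
        intervalIntegrable_const, hmassAB, intervalIntegral.integral_const, smul_eq_mul]
      ring
    rw [e1, e2] at key
    have hts0 : 0 < ts := hts.1
    nlinarith
  -- assemble
  refine ⟨(A, B), ⟨haA, hbB, hFts, hmin, by rw [hpA, hpB]⟩, ?_⟩
  rintro ⟨x, y⟩ ⟨hx, hy, hmass, -, heq⟩
  simp only at hx hy hmass heq ⊢
  set t : ℝ := p x with htdef
  have htmem : t ∈ Set.Ioo 0 (p m) :=
    ⟨hppos x, hmono (Set.mem_Iic.mpr hx.le) Set.self_mem_Iic hx⟩
  have hxa : x = a t := huL t htmem x hx rfl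
  have hyb : y = b t := huR t htmem y hy heq.symm
  have hFt : F t = 1 - α := by
    simp only [hFdef]
    rw [← hxa, ← hyb]
    exact hmass
  have htt : t = ts := by
    rcases lt_trichotomy t ts with h | h | h
    · have := hFanti t htmem ts hts h
      rw [hFt, hFts] at this
      linarith
    · exact h
    · have := hFanti ts hts t htmem h
      rw [hFt, hFts] at this
      linarith
  rw [htt] at hxa hyb
  exact Prod.ext hxa hyb
end
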